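/- Let A have restricted isometry constants δ_q. Let ŵ ∈ W^k satisfy supp(x_S) ⊆ supp(ŵ), let x^p ∈ ℝⁿ be k-sparse, and let u^p = x^p + Aᵀ(y − A x^p). Then ‖y − A(u^p ⊗ ŵ)‖₂ ≤ δ_{2k}·√(1+δ_k)·‖x_S − x^p‖₂ + √(1+δ_k)·‖Aᵀν'‖₂ + ‖ν'‖₂. -/

import Mathlib

open Finset

open Matrix

noncomputable def nsq {ι : Type*} [Fintype ι] (x : ι → ℝ) : ℝ := ∑ i, (x i) ^ 2

noncomputable def n2 {ι : Type*} [Fintype ι] (x : ι → ℝ) : ℝ := Real.sqrt (nsq x)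

noncomputable def supp {n : ℕ} (x : Fin n → ℝ) : Finset (Fin n) :=
  Finset.univ.filter (fun i => x i ≠ 0)

def Sparse {n : ℕ} (k : ℕ) (x : Fin n → ℝ) : Prop := (supp x).card ≤ k

def restr {n : ℕ} (x : Fin n → ℝ) (T : Finset (Fin n)) : Fin n → ℝ :=
  fun i => if i ∈ T then x i else 0

def SatRIP {m n : ℕ} (A : Matrix (Fin m) (Fin n) ℝ) (q : ℕ) (δ : ℝ) : Prop :=
  ∀ z : Fin n → ℝ, Sparse q z →
    (1 - δ) * nsq z ≤ nsq (A.mulVec z) ∧ nsq (A.mulVec z) ≤ (1 + δ) * nsq z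

/-- `δ` is the `q`-th order restricted isometry constant of `A`:
the smallest `δ' ≥ 0` such that `(1-δ')‖z‖² ≤ ‖Az‖² ≤ (1+δ')‖z‖²` for all `q`-sparse `z`. -/
def IsRIC {m n : ℕ} (A : Matrix (Fin m) (Fin n) ℝ) (q : ℕ) (δ : ℝ) : Prop :=
  IsLeast {δ' : ℝ | 0 ≤ δ' ∧ SatRIP A q δ'} δ

/-- membership in `W^k`: binary vectors with exactly `k` entries equal to 1. -/
def InW {n : ℕ} (k : ℕ) (w : Fin n → ℝ) : Prop :=
  (∀ i, w i = 0 ∨ w i = 1) ∧ (Finset.univ.filter (fun i => w i = 1)).card = k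

/-- membership in the polytope `P^k`. -/
def InP {n : ℕ} (k : ℕ) (w : Fin n → ℝ) : Prop :=
  (∑ i, w i) = (k : ℝ) ∧ ∀ i, 0 ≤ w i ∧ w i ≤ 1

/-- `S` is an index set of the `k` largest absolute entries of `x`. -/
def IsTopK {n : ℕ} (x : Fin n → ℝ) (k : ℕ) (S : Finset (Fin n)) : Prop :=
  S.card = k ∧ ∀ i ∈ S, ∀ j ∉ S, |x j| ≤ |x i|

/-- `d` is a hard thresholding `H_k(z)` of `z`. -/
def IsHT {n : ℕ} (k : ℕ) (z d : Fin n → ℝ) : Prop :=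
  Sparse k d ∧ ∀ d' : Fin n → ℝ, Sparse k d' → n2 (z - d) ≤ n2 (z - d')

/-- `w 0, …, w (ω-1)` are successive compression minimizers at `x^p` (with `u^p = up`). -/
def SCM {m n : ℕ} (A : Matrix (Fin m) (Fin n) ℝ) (y : Fin m → ℝ) (k ω : ℕ)
    (up : Fin n → ℝ) (w : ℕ → Fin n → ℝ) : Prop :=
  ∀ j < ω, InP k (w j) ∧ ∀ v : Fin n → ℝ, InP k v →
    n2 (y - A.mulVec (up * (∏ l ∈ Finset.range j, w l) * w j)) ≤
    n2 (y - A.mulVec (up * (∏ l ∈ Finset.range j, w l) * v))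

/-- the `ℓ∞` norm of `x` restricted to `T` (zero if `T` is empty). -/
noncomputable def linfT {n : ℕ} (x : Fin n → ℝ) (T : Finset (Fin n)) : ℝ :=
  if h : T.Nonempty then T.sup' h (fun j => |x j|) else 0


section Helpers

open Finset

lemma nsq_nonneg {ι : Type*} [Fintype ι] (x : ι → ℝ) : 0 ≤ nsq x :=
  Finset.sum_nonneg fun _ _ => sq_nonneg _

lemma n2_nonneg {ι : Type*} [Fintype ι] (x : ι → ℝ) : 0 ≤ n2 x := Real.sqrt_nonneg _

lemma n2_sq {ι : Type*} [Fintype ι] (x : ι → ℝ) : n2 x ^ 2 = nsq x :=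
  Real.sq_sqrt (nsq_nonneg x)

lemma nsq_eq_mul {ι : Type*} [Fintype ι] (x : ι → ℝ) : nsq x = ∑ i, x i * x i := by
  simp [nsq, pow_two]

lemma eq_zero_of_n2 {ι : Type*} [Fintype ι] {x : ι → ℝ} (h : n2 x = 0) : x = 0 := by
  have h0 : nsq x = 0 := by rw [← n2_sq, h]; ring
  funext i
  have h1 := (Finset.sum_eq_zero_iff_of_nonneg
    (fun i _ => sq_nonneg (x i))).mp h0 i (Finset.mem_univ i)
  exact pow_eq_zero_iff (two_ne_zero) |>.mp h1

lemma n2_mono {ι : Type*} [Fintype ι] {x y : ι → ℝ} (h : ∀ i, x i ^ 2 ≤ y i ^ 2) :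
    n2 x ≤ n2 y :=
  Real.sqrt_le_sqrt (Finset.sum_le_sum fun i _ => h i)

lemma n2_add_le {ι : Type*} [Fintype ι] (x y : ι → ℝ) : n2 (x + y) ≤ n2 x + n2 y := by
  have hcs : ∑ i, x i * y i ≤ n2 x * n2 y := Real.sum_mul_le_sqrt_mul_sqrt Finset.univ x y
  have e : nsq (x + y) = nsq x + 2 * (∑ i, x i * y i) + nsq y := by
    simp only [nsq, Pi.add_apply]
    rw [show (∑ i, (x i + y i) ^ 2) = ∑ i, (x i ^ 2 + 2 * (x i * y i) + y i ^ 2) from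
      Finset.sum_congr rfl fun i _ => by ring]
    rw [Finset.sum_add_distrib, Finset.sum_add_distrib, ← Finset.mul_sum]
  have h1 : nsq (x + y) ≤ (n2 x + n2 y) ^ 2 := by
    have hx := n2_sq x; have hy := n2_sq y
    nlinarith [hcs]
  calc n2 (x + y) = Real.sqrt (nsq (x + y)) := rfl
    _ ≤ Real.sqrt ((n2 x + n2 y) ^ 2) := Real.sqrt_le_sqrt h1
    _ = n2 x + n2 y := Real.sqrt_sq (add_nonneg (n2_nonneg x) (n2_nonneg y))

lemma n2_neg {ι : Type*} [Fintype ι] (x : ι → ℝ) : n2 (-x) = n2 x := by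
  simp [n2, nsq]

lemma n2_sub_le {ι : Type*} [Fintype ι] (x y : ι → ℝ) : n2 (x - y) ≤ n2 x + n2 y := by
  rw [sub_eq_add_neg]
  simpa [n2_neg] using n2_add_le x (-y)

lemma sparse_of_zero_off {n q : ℕ} {z : Fin n → ℝ} {Ω : Finset (Fin n)} (hq : Ω.card ≤ q)
    (h : ∀ i ∉ Ω, z i = 0) : Sparse q z := by
  refine le_trans (Finset.card_le_card fun i hi => ?_) hq
  simp only [supp, Finset.mem_filter, Finset.mem_univ, true_and] at hi
  by_contra hiΩ
  exact hi (h i hiΩ)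

lemma sum_mul_expand {ι : Type*} [Fintype ι] (x y : ι → ℝ) (ε : ℝ) :
    ∑ i, (x i + ε * y i) * (x i + ε * y i)
      = (∑ i, x i * x i) + 2 * ε * (∑ i, x i * y i) + ε ^ 2 * (∑ i, y i * y i) := by
  rw [show (∑ i, (x i + ε * y i) * (x i + ε * y i))
      = ∑ i, (x i * x i + 2 * ε * (x i * y i) + ε ^ 2 * (y i * y i)) from
    Finset.sum_congr rfl fun i _ => by ring]
  rw [Finset.sum_add_distrib, Finset.sum_add_distrib, Finset.mul_sum, Finset.mul_sum]

lemma rip_quad {m n : ℕ} {A : Matrix (Fin m) (Fin n) ℝ} {q : ℕ} {δ : ℝ}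
    (hrip : SatRIP A q δ) {w : Fin n → ℝ} (hw : Sparse q w) :
    |(∑ i, w i * w i) - (A.mulVec w ⬝ᵥ A.mulVec w)| ≤ δ * nsq w := by
  obtain ⟨h1, h2⟩ := hrip w hw
  have e1 : ∑ i, w i * w i = nsq w := (nsq_eq_mul w).symm
  have e2 : A.mulVec w ⬝ᵥ A.mulVec w = nsq (A.mulVec w) := by
    simp [dotProduct, nsq_eq_mul]
  rw [e1, e2, abs_le]
  constructor <;> linarith

lemma rip_bilin_half {m n : ℕ} {A : Matrix (Fin m) (Fin n) ℝ} {q : ℕ} {δ : ℝ}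
    (hrip : SatRIP A q δ) {u v : Fin n → ℝ} {Ω : Finset (Fin n)} (hΩ : Ω.card ≤ q)
    (hu : ∀ i ∉ Ω, u i = 0) (hv : ∀ i ∉ Ω, v i = 0) :
    (∑ i, u i * v i) - (A.mulVec u ⬝ᵥ A.mulVec v) ≤ δ * (nsq u + nsq v) / 2 := by
  have hpU : Sparse q (u + v) := sparse_of_zero_off hΩ
    (fun i hi => by simp [hu i hi, hv i hi])
  have hpQ : Sparse q (u - v) := sparse_of_zero_off hΩ
    (fun i hi => by simp [hu i hi, hv i hi])
  have hBp := rip_quad hrip hpU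
  have hBq := rip_quad hrip hpQ
  have eAp : A.mulVec (u + v) = A.mulVec u + A.mulVec v := Matrix.mulVec_add A u v
  have eAq : A.mulVec (u - v) = A.mulVec u - A.mulVec v := Matrix.mulVec_sub A u v
  have e1 : ∑ i, (u + v) i * (u + v) i
      = (∑ i, u i * u i) + 2 * (∑ i, u i * v i) + (∑ i, v i * v i) := by
    have := sum_mul_expand u v 1
    simpa using this
  have e2 : ∑ i, (u - v) i * (u - v) i
      = (∑ i, u i * u i) - 2 * (∑ i, u i * v i) + (∑ i, v i * v i) := by
    have := sum_mul_expand u v (-1)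
    simp only [Pi.sub_apply]
    rw [show (∑ i, (u i - v i) * (u i - v i)) = ∑ i, (u i + (-1) * v i) * (u i + (-1) * v i) from
      Finset.sum_congr rfl fun i _ => by ring]
    rw [this]; ring
  have e3 : A.mulVec (u + v) ⬝ᵥ A.mulVec (u + v)
      = (A.mulVec u ⬝ᵥ A.mulVec u) + 2 * (A.mulVec u ⬝ᵥ A.mulVec v)
        + (A.mulVec v ⬝ᵥ A.mulVec v) := by
    rw [eAp]
    simp only [dotProduct, Pi.add_apply]
    have := sum_mul_expand (A.mulVec u) (A.mulVec v) 1
    simpa using this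
  have e4 : A.mulVec (u - v) ⬝ᵥ A.mulVec (u - v)
      = (A.mulVec u ⬝ᵥ A.mulVec u) - 2 * (A.mulVec u ⬝ᵥ A.mulVec v)
        + (A.mulVec v ⬝ᵥ A.mulVec v) := by
    rw [eAq]
    simp only [dotProduct, Pi.sub_apply]
    have := sum_mul_expand (A.mulVec u) (A.mulVec v) (-1)
    rw [show (∑ i, (A.mulVec u i - A.mulVec v i) * (A.mulVec u i - A.mulVec v i))
        = ∑ i, (A.mulVec u i + (-1) * A.mulVec v i) * (A.mulVec u i + (-1) * A.mulVec v i) from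
      Finset.sum_congr rfl fun i _ => by ring]
    rw [this]; ring
  have np : nsq (u + v) = (∑ i, u i * u i) + 2 * (∑ i, u i * v i) + (∑ i, v i * v i) := by
    rw [nsq_eq_mul]; exact e1
  have nq : nsq (u - v) = (∑ i, u i * u i) - 2 * (∑ i, u i * v i) + (∑ i, v i * v i) := by
    rw [nsq_eq_mul]; exact e2
  have nu : nsq u = ∑ i, u i * u i := nsq_eq_mul u
  have nv : nsq v = ∑ i, v i * v i := nsq_eq_mul v
  rw [e1, e3, np, abs_le] at hBp
  rw [e2, e4, nq, abs_le] at hBq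
  obtain ⟨_, hBp2⟩ := hBp
  obtain ⟨hBq1, _⟩ := hBq
  rw [nu, nv]
  linarith [hBp2, hBq1]

lemma rip_n2_bound {m n : ℕ} {A : Matrix (Fin m) (Fin n) ℝ} {q : ℕ} {δ : ℝ} (hδ : 0 ≤ δ)
    (hrip : SatRIP A q δ) {u v : Fin n → ℝ} {Ω : Finset (Fin n)} (hΩ : Ω.card ≤ q)
    (hu : ∀ i ∉ Ω, u i = 0) (hv : ∀ i ∉ Ω, v i = 0)
    (hgv : nsq v = (∑ i, u i * v i) - (A.mulVec u ⬝ᵥ A.mulVec v)) :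
    n2 v ≤ δ * n2 u := by
  by_cases hv0 : n2 v = 0
  · rw [hv0]; exact mul_nonneg hδ (n2_nonneg u)
  by_cases hu0 : n2 u = 0
  · exfalso
    have hu' : u = 0 := eq_zero_of_n2 hu0
    rw [hu'] at hgv
    simp [Matrix.mulVec_zero, zero_dotProduct] at hgv
    exact hv0 (by rw [n2, hgv, Real.sqrt_zero])
  have hvpos : 0 < n2 v := lt_of_le_of_ne (n2_nonneg v) (Ne.symm hv0)
  have hupos : 0 < n2 u := lt_of_le_of_ne (n2_nonneg u) (Ne.symm hu0)
  set c := Real.sqrt (n2 v / n2 u) with hc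
  have hcpos : 0 < c := Real.sqrt_pos.mpr (div_pos hvpos hupos)
  have hc2 : c ^ 2 = n2 v / n2 u := Real.sq_sqrt (le_of_lt (div_pos hvpos hupos))
  have key := rip_bilin_half hrip hΩ (u := c • u) (v := c⁻¹ • v)
    (fun i hi => by simp [hu i hi]) (fun i hi => by simp [hv i hi])
  have e1 : ∑ i, (c • u) i * (c⁻¹ • v) i = ∑ i, u i * v i :=
    Finset.sum_congr rfl fun i _ => by
      simp only [Pi.smul_apply, smul_eq_mul]
      field_simp
  have e2 : A.mulVec (c • u) ⬝ᵥ A.mulVec (c⁻¹ • v) = A.mulVec u ⬝ᵥ A.mulVec v := by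
    rw [Matrix.mulVec_smul, Matrix.mulVec_smul]
    simp only [dotProduct, Pi.smul_apply, smul_eq_mul]
    refine Finset.sum_congr rfl fun i _ => ?_
    field_simp
  have e3 : nsq (c • u) = n2 v * n2 u := by
    have h1 : nsq (c • u) = c ^ 2 * nsq u := by
      simp only [nsq, Pi.smul_apply, smul_eq_mul, mul_pow, Finset.mul_sum]
    rw [h1, hc2, ← n2_sq u]
    field_simp
  have e4 : nsq (c⁻¹ • v) = n2 u * n2 v := by
    have h1 : nsq (c⁻¹ • v) = (c ^ 2)⁻¹ * nsq v := by
      simp only [nsq, Pi.smul_apply, smul_eq_mul, mul_pow, Finset.mul_sum, inv_pow]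
    rw [h1, hc2, ← n2_sq v]
    field_simp
  rw [e1, e2, e3, e4, ← hgv] at key
  have hfin : n2 v * n2 v ≤ (δ * n2 u) * n2 v := by
    have hvs := n2_sq v
    nlinarith [key]
  exact le_of_mul_le_mul_right hfin hvpos

end Helpers

theorem stmt14
    {m n : ℕ} (A : Matrix (Fin m) (Fin n) ℝ)
    (x : Fin n → ℝ) (ν y : Fin m → ℝ) (hy : y = A.mulVec x + ν)
    (k : ℕ) (hk : 0 < k)
    (S : Finset (Fin n)) (hS : IsTopK x k S)
    (ν' : Fin m → ℝ) (hν' : ν' = A.mulVec (restr x Sᶜ) + ν)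
    (δk δ2k : ℝ) (hδk : IsRIC A k δk) (hδ2k : IsRIC A (2 * k) δ2k)
    (wh : Fin n → ℝ) (hwh : InW k wh) (hsupp : supp (restr x S) ⊆ supp wh)
    (xp : Fin n → ℝ) (hxp : Sparse k xp)
    (up : Fin n → ℝ) (hup : up = xp + A.transpose.mulVec (y - A.mulVec xp)) :
    n2 (y - A.mulVec (up * wh))
      ≤ δ2k * Real.sqrt (1 + δk) * n2 (restr x S - xp)
        + Real.sqrt (1 + δk) * n2 (A.transpose.mulVec ν')
        + n2 ν' := by
  obtain ⟨⟨hδk0, hsatk⟩, _⟩ := hδk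
  obtain ⟨⟨hδ2k0, hsat2k⟩, _⟩ := hδ2k
  obtain ⟨hbin, hTcard⟩ := hwh
  set T : Finset (Fin n) := Finset.univ.filter (fun i => wh i = 1) with hTdef
  have hwh1 : ∀ i ∈ T, wh i = 1 := fun i hi => (Finset.mem_filter.mp hi).2
  have hwh0 : ∀ i ∉ T, wh i = 0 := by
    intro i hi
    rcases hbin i with h0 | h0
    · exact h0
    · exact absurd (Finset.mem_filter.mpr ⟨Finset.mem_univ i, h0⟩) hi
  have hxS0 : ∀ i ∉ T, restr x S i = 0 := by
    intro i hi
    by_contra h0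
    have h1 : i ∈ supp wh := hsupp (Finset.mem_filter.mpr ⟨Finset.mem_univ i, h0⟩)
    have h2 : wh i ≠ 0 := (Finset.mem_filter.mp h1).2
    exact h2 (hwh0 i hi)
  set h := restr x S - xp with hh
  set z := h - A.transpose.mulVec (A.mulVec h) with hz
  set g := restr z T with hg
  set r := restr (A.transpose.mulVec ν') T with hr
  have hxsplit : x = restr x S + restr x Sᶜ := by
    funext i
    by_cases hi : i ∈ S <;> simp [restr, hi]
  have hAx : A.mulVec x = A.mulVec (restr x S) + A.mulVec (restr x Sᶜ) := by
    rw [← Matrix.mulVec_add, ← hxsplit]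
  have hyS : y = A.mulVec (restr x S) + ν' := by
    rw [hy, hν', hAx]; abel
  have hup' : up = xp + A.transpose.mulVec (A.mulVec h) + A.transpose.mulVec ν' := by
    rw [hup]
    have h1 : y - A.mulVec xp = A.mulVec h + ν' := by
      rw [hyS, hh, Matrix.mulVec_sub]; abel
    rw [h1, Matrix.mulVec_add]; abel
  have hkey : restr x S - up * wh = g - r := by
    funext i
    by_cases hi : i ∈ T
    · have h1 : wh i = 1 := hwh1 i hi
      have h2 : up i = xp i + A.transpose.mulVec (A.mulVec h) i + A.transpose.mulVec ν' i := by
        rw [hup']; rfl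
      simp only [Pi.sub_apply, Pi.mul_apply, h1, mul_one, hg, hr, restr, if_pos hi, hz,
        Pi.sub_apply, hh]
      rw [h2]; ring
    · have h1 : wh i = 0 := hwh0 i hi
      have hgi : g i = 0 := by simp [hg, restr, if_neg hi]
      have hri : r i = 0 := by simp [hr, restr, if_neg hi]
      simp [Pi.sub_apply, Pi.mul_apply, h1, hgi, hri, hxS0 i hi]
  have hmain : y - A.mulVec (up * wh) = A.mulVec (g - r) + ν' := by
    rw [hyS, ← hkey, Matrix.mulVec_sub]; abel
  have hgr_supp : ∀ i ∉ T, (g - r) i = 0 := fun i hi => by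
    simp [hg, hr, restr, if_neg hi]
  have hTk : T.card = k := hTcard
  have hsp_gr : Sparse k (g - r) := sparse_of_zero_off (le_of_eq hTk) hgr_supp
  have hA1 : n2 (A.mulVec (g - r)) ≤ Real.sqrt (1 + δk) * n2 (g - r) := by
    have hb := (hsatk _ hsp_gr).2
    calc n2 (A.mulVec (g - r)) = Real.sqrt (nsq (A.mulVec (g - r))) := rfl
      _ ≤ Real.sqrt ((1 + δk) * nsq (g - r)) := Real.sqrt_le_sqrt hb
      _ = Real.sqrt (1 + δk) * n2 (g - r) := by rw [Real.sqrt_mul (by linarith)]; rfl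
  have htri1 : n2 (y - A.mulVec (up * wh)) ≤ n2 (A.mulVec (g - r)) + n2 ν' := by
    rw [hmain]; exact n2_add_le _ _
  have htri2 : n2 (g - r) ≤ n2 g + n2 r := n2_sub_le _ _
  have hrle : n2 r ≤ n2 (A.transpose.mulVec ν') := n2_mono fun i => by
    by_cases hi : i ∈ T <;> simp [hr, restr, hi, sq_nonneg]
  have hgle : n2 g ≤ δ2k * n2 h := by
    set Ω := T ∪ supp xp with hΩdef
    have hΩc : Ω.card ≤ 2 * k := by
      calc Ω.card ≤ T.card + (supp xp).card := Finset.card_union_le _ _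
        _ ≤ k + k := add_le_add (le_of_eq hTk) hxp
        _ = 2 * k := by ring
    have hhu : ∀ i ∉ Ω, h i = 0 := by
      intro i hi
      simp only [hΩdef, Finset.mem_union, not_or] at hi
      have hx0 := hxS0 i hi.1
      have hxp0 : xp i = 0 := by
        by_contra h0
        exact hi.2 (Finset.mem_filter.mpr ⟨Finset.mem_univ i, h0⟩)
      simp [hh, Pi.sub_apply, hx0, hxp0]
    have hgv0 : ∀ i ∉ Ω, g i = 0 := fun i hi => by
      have hiT : i ∉ T := fun hT' => hi (Finset.mem_union_left _ hT')
      simp [hg, restr, if_neg hiT]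
    have hdot : A.mulVec h ⬝ᵥ A.mulVec g
        = ∑ i, (A.transpose.mulVec (A.mulVec h)) i * g i := by
      rw [Matrix.dotProduct_mulVec, ← Matrix.mulVec_transpose]
      rfl
    have hgv : nsq g = (∑ i, h i * g i) - (A.mulVec h ⬝ᵥ A.mulVec g) := by
      rw [hdot, ← Finset.sum_sub_distrib, nsq_eq_mul]
      refine Finset.sum_congr rfl fun i _ => ?_
      by_cases hi : i ∈ T
      · simp only [hg, restr, if_pos hi, hz, Pi.sub_apply]
        ring
      · simp [hg, restr, if_neg hi]
    exact rip_n2_bound hδ2k0 hsat2k hΩc hhu hgv0 hgv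
  have hsqrt0 : 0 ≤ Real.sqrt (1 + δk) := Real.sqrt_nonneg _
  have hgr2 : n2 (g - r) ≤ δ2k * n2 h + n2 (A.transpose.mulVec ν') := by linarith
  calc n2 (y - A.mulVec (up * wh)) ≤ n2 (A.mulVec (g - r)) + n2 ν' := htri1
    _ ≤ Real.sqrt (1 + δk) * n2 (g - r) + n2 ν' := by linarith
    _ ≤ Real.sqrt (1 + δk) * (δ2k * n2 h + n2 (A.transpose.mulVec ν')) + n2 ν' := by
        nlinarith [mul_le_mul_of_nonneg_left hgr2 hsqrt0]
    _ = δ2k * Real.sqrt (1 + δk) * n2 h + Real.sqrt (1 + δk) * n2 (A.transpose.mulVec ν')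
        + n2 ν' := by ring
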